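/- Let G be a finite insoluble group and N a normal subgroup of G. Then P_s(G) ≤ P_s(G/N). Moreover, if N is soluble, then P_s(G) = P_s(G/N). -/

import Mathlib

open Subgroup

/-- The soluble radical of a group: the join of all soluble normal subgroups. -/
def solRadical (G : Type*) [Group G] : Subgroup G :=
  sSup {N : Subgroup G | N.Normal ∧ IsSolvable N}

instance solRadical_normal {G : Type*} [Group G] : (solRadical G).Normal := by
  constructor
  intro n hn g
  have h : solRadical G ≤ (solRadical G).comap (MulAut.conj g).toMonoidHom := by
    apply sSup_le
    rintro N ⟨hnorm, hsol⟩ x hx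
    simp only [Subgroup.mem_comap, MulEquiv.coe_toMonoidHom, MulAut.conj_apply]
    exact le_sSup (s := {N : Subgroup G | N.Normal ∧ IsSolvable N}) ⟨hnorm, hsol⟩
      (hnorm.conj_mem x hx g)
  simpa using h hn

/-- The solubilizer of an element `x`: all `g` such that `⟨x, g⟩` is soluble. -/
def solubilizer {G : Type*} [Group G] (x : G) : Set G :=
  {g : G | IsSolvable (Subgroup.closure ({x, g} : Set G))}

/-- The solubility graph: vertices are elements outside the soluble radical,
two distinct vertices adjacent iff they generate a soluble subgroup. -/
def solGraph (G : Type*) [Group G] : SimpleGraph {x : G // x ∉ solRadical G} where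
  Adj a b := a ≠ b ∧ IsSolvable (Subgroup.closure ({a.1, b.1} : Set G))
  symm := ⟨by rintro a b ⟨hne, hs⟩; exact ⟨hne.symm, by rwa [Set.pair_comm]⟩⟩
  loopless := ⟨by rintro a ⟨h, -⟩; exact h rfl⟩

noncomputable instance {G : Type*} [Group G] [Fintype G] :
    Fintype {x : G // x ∉ solRadical G} := Fintype.ofFinite _

/-- The degree of `x` in the solubility graph (as the number of its neighbours). -/
noncomputable def solDeg (G : Type*) [Group G] (x : G) : ℕ :=
  {g : G | g ∉ solRadical G ∧ g ≠ x ∧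
    IsSolvable (Subgroup.closure ({x, g} : Set G))}.ncard

/-- The number of edges of the solubility graph. -/
noncomputable def solEdges (G : Type*) [Group G] : ℕ :=
  (solGraph G).edgeSet.ncard

/-- The solubility degree of a finite group. -/
noncomputable def Ps (G : Type*) [Group G] : ℚ :=
  (Nat.card {p : G × G // IsSolvable (Subgroup.closure ({p.1, p.2} : Set G))} : ℚ) /
    (Nat.card G : ℚ) ^ 2

section Aux

variable {G : Type*} [Group G] (N : Subgroup G) [N.Normal]

lemma sol_map' (x y : G) (h : IsSolvable (Subgroup.closure ({x, y} : Set G))) :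
    IsSolvable (Subgroup.closure ({(x : G ⧸ N), (y : G ⧸ N)} : Set (G ⧸ N))) := by
  haveI : Group.IsSolvable (Subgroup.closure ({x, y} : Set G)) := h
  have heq : (Subgroup.closure ({x, y} : Set G)).map (QuotientGroup.mk' N) =
      Subgroup.closure ({(x : G ⧸ N), (y : G ⧸ N)} : Set (G ⧸ N)) := by
    rw [MonoidHom.map_closure, Set.image_pair]; rfl
  rw [← heq]
  exact solvable_of_surjective ((QuotientGroup.mk' N).subgroupMap_surjective _)

lemma sol_comap' (hN : IsSolvable N) (x y : G)
    (h : IsSolvable (Subgroup.closure ({(x : G ⧸ N), (y : G ⧸ N)} : Set (G ⧸ N)))) :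
    IsSolvable (Subgroup.closure ({x, y} : Set G)) := by
  haveI : Group.IsSolvable (Subgroup.closure ({(x : G ⧸ N), (y : G ⧸ N)} : Set (G ⧸ N))) := h
  haveI : Group.IsSolvable N := hN
  set K := Subgroup.closure ({(x : G ⧸ N), (y : G ⧸ N)} : Set (G ⧸ N))
  set H := K.comap (QuotientGroup.mk' N) with hH
  have hNH : N ≤ H := by
    intro n hn
    simp only [hH, Subgroup.mem_comap]
    have h1 : (QuotientGroup.mk' N) n = 1 := by
      rw [← QuotientGroup.ker_mk' N] at hn; exact hn
    rw [h1]; exact one_mem _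
  have hHsol : IsSolvable H := by
    refine solvable_of_ker_le_range (Subgroup.inclusion hNH)
      (((QuotientGroup.mk' N).domRestrict H).codRestrict K (fun h => h.2)) ?_
    intro h hh
    have hmem : (h : G) ∈ N := by
      have h1 : (QuotientGroup.mk' N) (h : G) = 1 := by
        have := congrArg Subtype.val hh
        exact congrArg Subtype.val (MonoidHom.mem_ker.mp hh)
      rwa [← QuotientGroup.ker_mk' N]
    exact ⟨⟨(h : G), hmem⟩, rfl⟩
  haveI : Group.IsSolvable H := hHsol
  have hle : Subgroup.closure ({x, y} : Set G) ≤ H := by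
    rw [Subgroup.closure_le]
    rintro g (rfl | rfl)
    · exact Subgroup.subset_closure (Set.mem_insert _ _)
    · exact Subgroup.subset_closure (Set.mem_insert_of_mem _ rfl)
  exact solvable_of_solvable_injective (Subgroup.inclusion_injective hle)

/-- an explicit equiv G ≃ (G/N) × N whose first component is mk -/
noncomputable def myE : G ≃ (G ⧸ N) × N where
  toFun g := ((g : G ⧸ N), ⟨(Quotient.out ((g : G ⧸ N)))⁻¹ * g,
    QuotientGroup.eq.mp (QuotientGroup.out_eq' ((g : G ⧸ N)))⟩)
  invFun p := Quotient.out p.1 * (p.2 : G)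
  left_inv g := by simp [mul_inv_cancel_left]
  right_inv p := by
    obtain ⟨q, n⟩ := p
    have h1 : ((Quotient.out q * (n : G) : G) : G ⧸ N) = q := by
      rw [QuotientGroup.mk_mul_of_mem _ n.2]; exact QuotientGroup.out_eq' q
    refine Prod.ext h1 (Subtype.ext ?_)
    show (Quotient.out (((Quotient.out q * (n : G) : G) : G ⧸ N)))⁻¹ *
      (Quotient.out q * (n : G)) = n
    rw [h1, inv_mul_cancel_left]

/-- rearranging equiv -/
noncomputable def e3 :
    {z : ((G ⧸ N) × N) × ((G ⧸ N) × N) //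
      IsSolvable (Subgroup.closure ({z.1.1, z.2.1} : Set (G ⧸ N)))} ≃
    {q : (G ⧸ N) × (G ⧸ N) // IsSolvable (Subgroup.closure ({q.1, q.2} : Set (G ⧸ N)))} ×
      (N × N) where
  toFun z := (⟨(z.1.1.1, z.1.2.1), z.2⟩, (z.1.1.2, z.1.2.2))
  invFun w := ⟨((w.1.1.1, w.2.1), (w.1.1.2, w.2.2)), w.1.2⟩
  left_inv := by rintro ⟨⟨⟨a, b⟩, ⟨c, d⟩⟩, h⟩; rfl
  right_inv := by rintro ⟨⟨⟨a, c⟩, h⟩, ⟨b, d⟩⟩; rfl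

/-- the key counting equiv -/
noncomputable def eqT :
    {p : G × G // IsSolvable (Subgroup.closure ({(p.1 : G ⧸ N), (p.2 : G ⧸ N)} : Set (G ⧸ N)))} ≃
    {q : (G ⧸ N) × (G ⧸ N) // IsSolvable (Subgroup.closure ({q.1, q.2} : Set (G ⧸ N)))} ×
      (N × N) :=
  (Equiv.subtypeEquiv ((myE N).prodCongr (myE N)) (fun p => Iff.rfl)).trans (e3 N)

end Aux

theorem stmt9 {G : Type*} [Group G] [Fintype G] (hG : ¬ IsSolvable G)
    (N : Subgroup G) [N.Normal] :
    Ps G ≤ Ps (G ⧸ N) ∧ (IsSolvable N → Ps G = Ps (G ⧸ N)) := by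
  classical
  set a := Nat.card {p : G × G // IsSolvable (Subgroup.closure ({p.1, p.2} : Set G))} with ha
  set b := Nat.card {q : (G ⧸ N) × (G ⧸ N) //
    IsSolvable (Subgroup.closure ({q.1, q.2} : Set (G ⧸ N)))} with hb
  set n := Nat.card N with hn
  set q := Nat.card (G ⧸ N) with hq
  have hcardT : Nat.card {p : G × G //
      IsSolvable (Subgroup.closure ({(p.1 : G ⧸ N), (p.2 : G ⧸ N)} : Set (G ⧸ N)))} =
      b * (n * n) := by
    rw [Nat.card_congr (eqT N), Nat.card_prod, Nat.card_prod]
  have hG_card : Nat.card G = q * n := Subgroup.card_eq_card_quotient_mul_card_subgroup N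
  have hn0 : 0 < n := Nat.card_pos
  have hq0 : 0 < q := Nat.card_pos
  have hle : a ≤ b * (n * n) := by
    rw [← hcardT]
    exact Nat.card_le_card_of_injective
      (fun s => ⟨s.1, sol_map' N s.1.1 s.1.2 s.2⟩)
      (fun s t hst => by
        apply Subtype.ext
        have h2 := congrArg Subtype.val hst
        simpa using h2)
  constructor
  · show (a : ℚ) / (Nat.card G : ℚ) ^ 2 ≤ (b : ℚ) / (q : ℚ) ^ 2
    rw [hG_card]
    have key : (a : ℚ) ≤ (b : ℚ) * (n : ℚ) * (n : ℚ) := by exact_mod_cast (by linarith : a ≤ b * n * n)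
    rw [div_le_div_iff₀ (by positivity) (by positivity)]
    push_cast
    calc (a : ℚ) * (q : ℚ) ^ 2 ≤ ((b : ℚ) * n * n) * (q : ℚ) ^ 2 :=
          mul_le_mul_of_nonneg_right key (by positivity)
      _ = (b : ℚ) * ((q : ℚ) * (n : ℚ)) ^ 2 := by ring
  · intro hNsol
    have heqcard : a = b * (n * n) := by
      rw [ha, ← hcardT]
      exact Nat.card_congr (Equiv.subtypeEquivRight
        (fun p => ⟨fun h => sol_map' N p.1 p.2 h, fun h => sol_comap' N hNsol p.1 p.2 h⟩))
    show (a : ℚ) / (Nat.card G : ℚ) ^ 2 = (b : ℚ) / (q : ℚ) ^ 2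
    rw [hG_card, heqcard]
    push_cast
    rw [div_eq_div_iff (by positivity) (by positivity)]
    ring
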